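/- If the differences {m₁ − m₂ : m₁, m₂ ∈ Ω, m₁ ≥ m₂} are coprime (gcd = 1), then any two atoms a_Ω(f₁), a_Ω(f₂) with f₁ ≠ f₂ in [0,1) are linearly independent; hence spark(A¹_Ω) ≥ 3. -/

import Mathlib

open Complex Matrix Finset
open scoped ComplexOrder

/-- The atom `a(f) = (1, e^{i2πf}, …, e^{i2π(N-1)f})` as a vector in `ℂ^N`. -/
noncomputable def atom (N : ℕ) (f : ℝ) : Fin N → ℂ :=
  fun j => Complex.exp (2 * Real.pi * Complex.I * ((j : ℕ) : ℂ) * (f : ℂ))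

/-- Restriction of the atom to the index set `Ω`. -/
noncomputable def atomRes (N : ℕ) (Ω : Finset (Fin N)) (f : ℝ) : Ω → ℂ :=
  fun m => atom N f (m : Fin N)

/-- Spark of the continuous dictionary `A¹_Ω`: the smallest number of distinct atoms
`a_Ω(f)` with `f ∈ [0,1)` that are linearly dependent. -/
noncomputable def spark (N : ℕ) (Ω : Finset (Fin N)) : ℕ :=
  sInf {k | ∃ S : Finset ℝ, S.card = k ∧ (↑S : Set ℝ) ⊆ Set.Ico (0 : ℝ) 1 ∧
    ¬ LinearIndependent ℂ (fun f : S => atomRes N Ω (f : ℝ))}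

/-- The set of pairwise differences `{m₁ − m₂ : m₁, m₂ ∈ Ω, m₁ ≥ m₂}`. -/
def diffs {N : ℕ} (Ω : Finset (Fin N)) : Finset ℕ :=
  (Ω ×ˢ Ω).filter (fun p => (p.2 : ℕ) ≤ (p.1 : ℕ)) |>.image (fun p => (p.1 : ℕ) - (p.2 : ℕ))

lemma aux_gcd_mul_int (g : ℝ) (s : Finset ℕ) (hs : ∀ d ∈ s, ∃ k : ℤ, (d : ℝ) * g = k) :
    ∃ k : ℤ, ((s.gcd id : ℕ) : ℝ) * g = k := by
  classical
  induction s using Finset.induction with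
  | empty => exact ⟨0, by simp⟩
  | @insert a s ha ih =>
    obtain ⟨k, hk⟩ := hs a (Finset.mem_insert_self a s)
    obtain ⟨l, hl⟩ := ih (fun d hd => hs d (Finset.mem_insert_of_mem hd))
    rw [Finset.gcd_insert]
    set b := s.gcd id with hb
    refine ⟨Nat.gcdA a b * k + Nat.gcdB a b * l, ?_⟩
    have hbez := Nat.gcd_eq_gcd_ab a b
    have hr : ((Nat.gcd a b : ℕ) : ℝ) = (a : ℝ) * (Nat.gcdA a b : ℝ) + (b : ℝ) * (Nat.gcdB a b : ℝ) := by
      exact_mod_cast congrArg (fun z : ℤ => (z : ℝ)) hbez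
    have : (GCDMonoid.gcd (id a) b : ℕ) = Nat.gcd a b := rfl
    rw [this, hr]
    push_cast
    linear_combination ((Nat.gcdA a b : ℝ)) * hk + ((Nat.gcdB a b : ℝ)) * hl

lemma aux_omega_nonempty {N : ℕ} {Ω : Finset (Fin N)} (h : (diffs Ω).gcd id = 1) :
    ∃ m, m ∈ Ω := by
  rcases Finset.eq_empty_or_nonempty (diffs Ω) with he | ⟨d, hd⟩
  · rw [he] at h; simp at h
  · simp only [_root_.diffs, Finset.mem_image, Finset.mem_filter, Finset.mem_product] at hd
    obtain ⟨p, ⟨⟨h1, _⟩, _⟩, _⟩ := hd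
    exact ⟨p.1, h1⟩

lemma aux_key (N : ℕ) (Ω : Finset (Fin N)) (h : (diffs Ω).gcd id = 1)
    {f₁ f₂ : ℝ} (h₁ : f₁ ∈ Set.Ico (0:ℝ) 1) (h₂ : f₂ ∈ Set.Ico (0:ℝ) 1) (hne : f₁ ≠ f₂)
    (s t : ℂ) (hst : s • atomRes N Ω f₁ + t • atomRes N Ω f₂ = 0) : s = 0 ∧ t = 0 := by
  obtain ⟨m₀, hm₀⟩ := aux_omega_nonempty h
  have heq : ∀ m : Fin N, m ∈ Ω →
      s * Complex.exp (2 * Real.pi * Complex.I * ((m : ℕ) : ℂ) * (f₁ : ℂ))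
        + t * Complex.exp (2 * Real.pi * Complex.I * ((m : ℕ) : ℂ) * (f₂ : ℂ)) = 0 := by
    intro m hm
    have := congrFun hst ⟨m, hm⟩
    simpa [atomRes, atom] using this
  by_cases hs : s = 0
  · subst hs
    have h0 := heq m₀ hm₀
    simp only [zero_mul, zero_add, mul_eq_zero] at h0
    exact ⟨rfl, h0.resolve_right (Complex.exp_ne_zero _)⟩
  · exfalso
    have hcross : ∀ m ∈ Ω, ∀ m' ∈ Ω,
        Complex.exp (2 * Real.pi * Complex.I * ((m : ℕ) : ℂ) * (f₁ : ℂ)) *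
          Complex.exp (2 * Real.pi * Complex.I * ((m' : ℕ) : ℂ) * (f₂ : ℂ)) =
        Complex.exp (2 * Real.pi * Complex.I * ((m' : ℕ) : ℂ) * (f₁ : ℂ)) *
          Complex.exp (2 * Real.pi * Complex.I * ((m : ℕ) : ℂ) * (f₂ : ℂ)) := by
      intro m hm m' hm'
      apply mul_left_cancel₀ hs
      linear_combination (Complex.exp (2 * Real.pi * Complex.I * ((m' : ℕ) : ℂ) * (f₂ : ℂ))) * heq m hm
        - (Complex.exp (2 * Real.pi * Complex.I * ((m : ℕ) : ℂ) * (f₂ : ℂ))) * heq m' hm'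
    have h2pi : (2 * (Real.pi : ℂ) * Complex.I) ≠ 0 := by
      simp [Real.pi_ne_zero, Complex.I_ne_zero]
    have hint : ∀ d ∈ diffs Ω, ∃ k : ℤ, (d : ℝ) * (f₁ - f₂) = k := by
      intro d hd
      simp only [_root_.diffs, Finset.mem_image, Finset.mem_filter, Finset.mem_product] at hd
      obtain ⟨p, ⟨⟨hp1, hp2⟩, hle⟩, hdeq⟩ := hd
      have hc := hcross p.1 hp1 p.2 hp2
      rw [← Complex.exp_add, ← Complex.exp_add] at hc
      rw [Complex.exp_eq_exp_iff_exp_sub_eq_one, Complex.exp_eq_one_iff] at hc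
      obtain ⟨n, hn⟩ := hc
      refine ⟨n, ?_⟩
      have hdc : ((d : ℕ) : ℂ) = ((p.1 : ℕ) : ℂ) - ((p.2 : ℕ) : ℂ) := by
        rw [← hdeq]; push_cast [Nat.cast_sub hle]; ring
      have hcc : ((d : ℕ) : ℂ) * ((f₁ : ℂ) - (f₂ : ℂ)) = (n : ℂ) := by
        apply mul_left_cancel₀ h2pi
        rw [hdc]
        linear_combination hn
      exact_mod_cast hcc
    obtain ⟨k, hk⟩ := aux_gcd_mul_int (f₁ - f₂) (diffs Ω) hint
    rw [h] at hk
    simp only [Nat.cast_one, one_mul] at hk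
    have hlt : |f₁ - f₂| < 1 := by
      rw [abs_lt]; constructor <;> [nlinarith [h₁.1, h₁.2, h₂.1, h₂.2]; nlinarith [h₁.1, h₁.2, h₂.1, h₂.2]]
    rw [hk] at hlt
    have : k = 0 := by
      have h1 : |k| < 1 := by exact_mod_cast (by rwa [← Int.cast_abs] at hlt : ((|k| : ℤ) : ℝ) < 1)
      exact Int.abs_lt_one_iff.mp h1
    rw [this] at hk
    simp at hk
    exact hne (by linarith)

lemma aux_pair (N : ℕ) (Ω : Finset (Fin N)) (h : (diffs Ω).gcd id = 1) :
    ∀ f₁ ∈ Set.Ico (0 : ℝ) 1, ∀ f₂ ∈ Set.Ico (0 : ℝ) 1, f₁ ≠ f₂ →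
      LinearIndependent ℂ ![atomRes N Ω f₁, atomRes N Ω f₂] := fun f₁ h₁ f₂ h₂ hne =>
  LinearIndependent.pair_iff.2 (fun s t hst => aux_key N Ω h h₁ h₂ hne s t hst)



lemma aux_dep_set (N : ℕ) (Ω : Finset (Fin N)) :
    ∃ S : Finset ℝ, S.card = N + 1 ∧ (↑S : Set ℝ) ⊆ Set.Ico (0 : ℝ) 1 ∧
      ¬ LinearIndependent ℂ (fun f : S => atomRes N Ω (f : ℝ)) := by
  classical
  have hpos : (0 : ℝ) < (N + 1 : ℝ) := by positivity
  have hinj : Function.Injective (fun i : ℕ => (i : ℝ) / (N + 1)) := by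
    intro i j hij
    field_simp at hij
    exact_mod_cast hij
  refine ⟨(Finset.range (N + 1)).image (fun i : ℕ => (i : ℝ) / (N + 1)), ?_, ?_, ?_⟩
  · rw [Finset.card_image_of_injective _ hinj, Finset.card_range]
  · intro x hx
    simp only [Finset.coe_image, Set.mem_image, Finset.mem_coe, Finset.mem_range] at hx
    obtain ⟨i, hi, rfl⟩ := hx
    constructor
    · positivity
    · rw [div_lt_one hpos]
      exact_mod_cast hi
  · intro hli
    have hcard := hli.fintype_card_le_finrank
    rw [Module.finrank_pi] at hcard
    simp only [Fintype.card_coe] at hcard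
    rw [Finset.card_image_of_injective _ hinj, Finset.card_range] at hcard
    have : Ω.card ≤ N := by
      have := Finset.card_le_univ Ω
      simpa using this
    omega

lemma aux_small (N : ℕ) (Ω : Finset (Fin N)) (h : (diffs Ω).gcd id = 1)
    (S : Finset ℝ) (hS : S.card ≤ 2) (hsub : (↑S : Set ℝ) ⊆ Set.Ico (0 : ℝ) 1) :
    LinearIndependent ℂ (fun f : S => atomRes N Ω (f : ℝ)) := by
  classical
  rcases (show S.card = 0 ∨ S.card = 1 ∨ S.card = 2 by omega) with h0 | h1 | h2
  · rw [Finset.card_eq_zero] at h0; subst h0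
    haveI : IsEmpty ((∅ : Finset ℝ) : Type) :=
      ⟨fun x => absurd x.2 (Finset.notMem_empty _)⟩
    exact linearIndependent_empty_type
  · obtain ⟨a, rfl⟩ := Finset.card_eq_one.mp h1
    haveI : Unique (({a} : Finset ℝ) : Type) :=
      ⟨⟨⟨a, Finset.mem_singleton_self a⟩⟩, fun x => Subtype.ext (Finset.mem_singleton.mp x.2)⟩
    apply linearIndependent_unique_iff.2
    obtain ⟨m₀, hm₀⟩ := aux_omega_nonempty h
    intro h0
    exact Complex.exp_ne_zero _ (congrFun h0 ⟨m₀, hm₀⟩)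
  · obtain ⟨a, b, hab, rfl⟩ := Finset.card_eq_two.mp h2
    have ha : a ∈ Set.Ico (0:ℝ) 1 := hsub (by simp)
    have hb : b ∈ Set.Ico (0:ℝ) 1 := hsub (by simp)
    have hli := aux_pair N Ω h a ha b hb hab
    set e : (({a, b} : Finset ℝ) : Type) → Fin 2 :=
      fun x => if (x : ℝ) = a then 0 else 1 with he
    have hba : ¬ b = a := fun hh => hab hh.symm
    have hinj : Function.Injective e := by
      rintro ⟨x, hx⟩ ⟨y, hy⟩ hxy
      simp only [Finset.mem_insert, Finset.mem_singleton] at hx hy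
      apply Subtype.ext
      simp only [he] at hxy
      split_ifs at hxy with h1 h2 h2
      · exact h1.trans h2.symm
      · exact absurd hxy (by decide)
      · exact absurd hxy (by decide)
      · exact (hx.resolve_left h1).trans (hy.resolve_left h2).symm
    have hcomp : (fun f : (({a, b} : Finset ℝ) : Type) => atomRes N Ω (f : ℝ)) =
        ![atomRes N Ω a, atomRes N Ω b] ∘ e := by
      funext x
      obtain ⟨x, hx⟩ := x
      simp only [Finset.mem_insert, Finset.mem_singleton] at hx
      by_cases hxa : x = a
      · simp [he, hxa]
      · have hxb : x = b := hx.resolve_left hxa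
        simp [he, hxa, hxb, hba]
    rw [hcomp]
    exact hli.comp e hinj

/-- if the pairwise differences of `Ω` are coprime, then any two atoms
with distinct frequencies in `[0,1)` are linearly independent; hence `spark ≥ 3`. -/
theorem spark_ge_three_of_coprime (N : ℕ) (Ω : Finset (Fin N))
    (h : (diffs Ω).gcd id = 1) :
    (∀ f₁ ∈ Set.Ico (0 : ℝ) 1, ∀ f₂ ∈ Set.Ico (0 : ℝ) 1, f₁ ≠ f₂ →
      LinearIndependent ℂ ![atomRes N Ω f₁, atomRes N Ω f₂]) ∧
    3 ≤ spark N Ω := by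
  classical
  refine ⟨aux_pair N Ω h, ?_⟩
  apply le_csInf
  · obtain ⟨S, h1, h2, h3⟩ := aux_dep_set N Ω
    exact ⟨N + 1, S, h1, h2, h3⟩
  · rintro k ⟨S, rfl, hsub, hnli⟩
    by_contra hk
    exact hnli (aux_small N Ω h S (by omega) hsub)
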